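/- If P_LoS(θ(h)) ≥ (S − μ_NLoS)/(μ_LoS − μ_NLoS) with P_LoS(θ) = b₁((180/π)θ − ζ)^{b₂}, θ(h) = arcsin(h/d), and μ_LoS < μ_NLoS, b₁, b₂ > 0, then (180/π)·arcsin(h/d) − ζ ≥ e^M where M = ln( ((S/(μ_LoS−μ_NLoS)) − μ_NLoS/(μ_LoS−μ_NLoS)) / b₁ ) / b₂, provided the argument of ln is positive; consequently h ≥ d·sin((π/180)(ζ + e^M)). -/

import Mathlib

theorem altitude_lower_bound
    (h d S b₁ b₂ ζ μ_LoS μ_NLoS M : ℝ)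
    (hd : 0 < d) (hh0 : 0 ≤ h) (hhd : h ≤ d)
    (hb₁ : 0 < b₁) (hb₂ : 0 < b₂) (hζ : 0 ≤ ζ)
    (hμ : μ_LoS < μ_NLoS)
    (hargpos : 0 < (S / (μ_LoS - μ_NLoS) - μ_NLoS / (μ_LoS - μ_NLoS)) / b₁)
    (hM : M = Real.log ((S / (μ_LoS - μ_NLoS) - μ_NLoS / (μ_LoS - μ_NLoS)) / b₁) / b₂)
    (hangpos : 0 < (180 / Real.pi) * Real.arcsin (h / d) - ζ)
    (hrange0 : 0 ≤ (Real.pi / 180) * (ζ + Real.exp M))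
    (hrange1 : (Real.pi / 180) * (ζ + Real.exp M) ≤ Real.pi / 2)
    (hP : b₁ * ((180 / Real.pi) * Real.arcsin (h / d) - ζ) ^ b₂ ≥
        (S - μ_NLoS) / (μ_LoS - μ_NLoS)) :
    (180 / Real.pi) * Real.arcsin (h / d) - ζ ≥ Real.exp M ∧
    h ≥ d * Real.sin ((Real.pi / 180) * (ζ + Real.exp M)) := by
  set A : ℝ := (180 / Real.pi) * Real.arcsin (h / d) - ζ with hA
  set X : ℝ := (S / (μ_LoS - μ_NLoS) - μ_NLoS / (μ_LoS - μ_NLoS)) / b₁ with hX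
  have hexpM : Real.exp M ^ b₂ = X := by
    rw [← Real.exp_mul, hM, div_mul_cancel₀ _ (ne_of_gt hb₂), Real.exp_log hargpos]
  have hstep : (S - μ_NLoS) / (μ_LoS - μ_NLoS) = b₁ * X := by
    rw [hX, mul_div_assoc', mul_comm b₁, mul_div_assoc, div_self (ne_of_gt hb₁), mul_one, sub_div]
  have hAX : X ≤ A ^ b₂ := by
    rw [hstep] at hP
    exact le_of_mul_le_mul_left hP hb₁
  have h1 : Real.exp M ≤ A := by
    by_contra hc
    push_neg at hc
    have := Real.rpow_lt_rpow (le_of_lt hangpos) hc hb₂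
    rw [hexpM] at this
    linarith
  refine ⟨h1, ?_⟩
  have harcsin : (Real.pi / 180) * (ζ + Real.exp M) ≤ Real.arcsin (h / d) := by
    have hpi : 0 < Real.pi := Real.pi_pos
    have h1' : Real.exp M ≤ (180 / Real.pi) * Real.arcsin (h / d) - ζ := by rw [hA] at h1; exact h1
    have : ζ + Real.exp M ≤ (180 / Real.pi) * Real.arcsin (h / d) := by linarith
    calc (Real.pi / 180) * (ζ + Real.exp M)
        ≤ (Real.pi / 180) * ((180 / Real.pi) * Real.arcsin (h / d)) := by
          apply mul_le_mul_of_nonneg_left this (by positivity)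
      _ = Real.arcsin (h / d) := by field_simp
  have hsin : Real.sin ((Real.pi / 180) * (ζ + Real.exp M)) ≤ Real.sin (Real.arcsin (h / d)) := by
    apply Real.strictMonoOn_sin.monotoneOn
    · constructor
      · linarith [Real.pi_pos]
      · exact hrange1
    · exact ⟨Real.neg_pi_div_two_le_arcsin _, Real.arcsin_le_pi_div_two _⟩
    · exact harcsin
  have hdiv : (0:ℝ) ≤ h / d := by positivity
  rw [Real.sin_arcsin (by linarith) (div_le_one_of_le₀ hhd hd.le)] at hsin
  calc d * Real.sin ((Real.pi / 180) * (ζ + Real.exp M))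
      ≤ d * (h / d) := by apply mul_le_mul_of_nonneg_left hsin hd.le
    _ = h := by field_simp
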